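/- Let X be a separable metrizable space that is {A_s : s ∈ S}-cohesive, witnessed by a base ℬ of open sets (i.e., every point of X has a neighborhood U ∈ ℬ such that U contains no nonempty proper clopen subset of any A_s). Let 𝒜 = { φₙ[A_{s₁} × ⋯ × A_{sₙ}] : n ∈ ℕ, s₁,…,sₙ ∈ S }, viewed as a collection of subsets of ℱ(X). Then ℱ(X) is 𝒜-cohesive, and the witnessing open neighborhoods may be taken from the collection 𝒞 = { ⟨U₁,…,Uₙ⟩ : n ∈ ℕ, U₁,…,Uₙ ∈ ℬ }. -/

import Mathlib

open Set Topology Filter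

/-- The Vietoris topology on `Set X` induced by a topology `t` on `X`, generated by the
subbasic sets `{F | F ⊆ U}` and `{F | F ∩ U ≠ ∅}` for `U` open in `t`. -/
def vietoris {X : Type*} (t : TopologicalSpace X) : TopologicalSpace (Set X) :=
  TopologicalSpace.generateFrom
    {S | (∃ U : Set X, IsOpen[t] U ∧ S = {F : Set X | F ⊆ U}) ∨
         (∃ U : Set X, IsOpen[t] U ∧ S = {F : Set X | (F ∩ U).Nonempty})}

/-- `ℱ(X)`: the hyperspace of nonempty finite subsets of `X`. -/
def FinHyp (X : Type*) : Type _ := {F : Set X // F.Finite ∧ F.Nonempty}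

noncomputable instance FinHyp.instCoeOut {X : Type*} : CoeOut (FinHyp X) (Set X) :=
  ⟨Subtype.val⟩

/-- `ℱ(X)` carries the (subspace) Vietoris topology. -/
instance FinHyp.instTopologicalSpace {X : Type*} [t : TopologicalSpace X] :
    TopologicalSpace (FinHyp X) :=
  (vietoris t).induced Subtype.val

/-- `C` is a nonempty proper clopen subset of `A` means: `C ⊆ A` and `C` is clopen in the
subspace topology of `A`. -/
def ClopenIn {Y : Type*} [TopologicalSpace Y] (A C : Set Y) : Prop :=
  C ⊆ A ∧ IsClopen {y : A | (y : Y) ∈ C}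

/-- `φₙ[A 0 × ⋯ × A (n-1)]`, the image under `φₙ(x₁,…,xₙ) = {x₁,…,xₙ}` of a product of
subsets of `X`, viewed as a subset of `ℱ(X)`. -/
def phiImg {X : Type*} (n : ℕ) (A : Fin n → Set X) : Set (FinHyp X) :=
  {F | ∃ f : Fin n → X, (∀ i, f i ∈ A i) ∧ (F : Set X) = Set.range f}

/-- The basic Vietoris set `⟨U 0, …, U (k-1)⟩`, viewed as a subset of `ℱ(X)`. -/
def vBasic {X : Type*} (k : ℕ) (U : Fin k → Set X) : Set (FinHyp X) :=
  {F | (F : Set X) ⊆ ⋃ i, U i ∧ ∀ i, ((F : Set X) ∩ U i).Nonempty}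

open Function

lemma finHyp_val_continuous {X : Type*} [t : TopologicalSpace X] :
    Continuous[FinHyp.instTopologicalSpace, vietoris t] (Subtype.val : FinHyp X → Set X) :=
  continuous_induced_dom

lemma vBasic_isOpen {X : Type*} [t : TopologicalSpace X] (k : ℕ) (U : Fin k → Set X)
    (hU : ∀ i, IsOpen (U i)) : IsOpen (vBasic k U) := by
  letI tv : TopologicalSpace (Set X) := vietoris t
  have h1 : IsOpen[tv] {G : Set X | G ⊆ ⋃ i, U i} :=
    TopologicalSpace.isOpen_generateFrom_of_mem (Or.inl ⟨⋃ i, U i, isOpen_iUnion hU, rfl⟩)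
  have h2 : ∀ i, IsOpen[tv] {G : Set X | (G ∩ U i).Nonempty} := fun i =>
    TopologicalSpace.isOpen_generateFrom_of_mem (Or.inr ⟨U i, hU i, rfl⟩)
  have h3 : IsOpen[tv] ({G : Set X | G ⊆ ⋃ i, U i} ∩ ⋂ i, {G : Set X | (G ∩ U i).Nonempty}) :=
    h1.inter (isOpen_iInter_of_finite h2)
  have heq : vBasic k U = Subtype.val ⁻¹'
      ({G : Set X | G ⊆ ⋃ i, U i} ∩ ⋂ i, {G : Set X | (G ∩ U i).Nonempty}) := by
    ext F; simp [vBasic, Set.mem_iInter]; exact ⟨fun h => ⟨h.1, Set.mem_iInter.2 h.2⟩, fun h => ⟨h.1, Set.mem_iInter.1 h.2⟩⟩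
  rw [heq]
  exact h3.preimage finHyp_val_continuous

lemma range_update_continuous {X : Type*} [t : TopologicalSpace X] {m : ℕ} (f : Fin m → X)
    (i : Fin m) :
    Continuous[t, vietoris t] (fun x : X => Set.range (Function.update f i x)) := by
  apply continuous_generateFrom_iff.2
  rintro s (⟨U, hU, rfl⟩ | ⟨U, hU, rfl⟩)
  · by_cases h : ∀ j, j ≠ i → f j ∈ U
    · have heq : (fun x : X => Set.range (Function.update f i x)) ⁻¹' {F | F ⊆ U} = U := by
        ext x
        simp only [mem_preimage, mem_setOf_eq]
        constructor
        · intro hx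
          have := hx (mem_range_self i)
          rwa [update_self] at this
        · rintro hx y ⟨j, rfl⟩
          rcases eq_or_ne j i with rfl | hj
          · rwa [update_self]
          · rw [update_of_ne hj]; exact h j hj
      rw [heq]; exact hU
    · have heq : (fun x : X => Set.range (Function.update f i x)) ⁻¹' {F | F ⊆ U} = ∅ := by
        ext x
        simp only [mem_preimage, mem_setOf_eq, mem_empty_iff_false, iff_false]
        intro hx
        push_neg at h
        obtain ⟨j, hj, hfj⟩ := h
        exact hfj (by simpa [update_of_ne hj] using hx (mem_range_self j))
      rw [heq]; exact isOpen_empty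
  · by_cases h : ∃ j, j ≠ i ∧ f j ∈ U
    · have heq : (fun x : X => Set.range (Function.update f i x)) ⁻¹'
          {F | (F ∩ U).Nonempty} = univ := by
        ext x
        simp only [mem_preimage, mem_setOf_eq, mem_univ, iff_true]
        obtain ⟨j, hj, hfj⟩ := h
        exact ⟨f j, ⟨j, update_of_ne hj _ _⟩, hfj⟩
      rw [heq]; exact isOpen_univ
    · have heq : (fun x : X => Set.range (Function.update f i x)) ⁻¹'
          {F | (F ∩ U).Nonempty} = U := by
        ext x
        simp only [mem_preimage, mem_setOf_eq]
        constructor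
        · rintro ⟨y, ⟨j, rfl⟩, hyU⟩
          rcases eq_or_ne j i with rfl | hj
          · rwa [update_self] at hyU
          · exact absurd ⟨j, hj, by rwa [update_of_ne hj] at hyU⟩ h
        · intro hx
          exact ⟨x, ⟨i, update_self _ _ _⟩, hx⟩
      rw [heq]; exact hU

/-- The key lemma: a nonempty clopen subset of `φₘ[∏ A(s i)]` contained in a basic Vietoris
set built from pairwise disjoint cohesion witnesses is the whole image. -/
lemma key_lemma {X S : Type*} [t : TopologicalSpace X] (A : S → Set X) {k : ℕ}
    (U : Fin k → Set X) (hUo : ∀ i, IsOpen (U i))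
    (hdisj : ∀ i j, i ≠ j → ∀ x, x ∈ U i → x ∉ U j)
    (hwit : ∀ i, ∀ s : S, ∀ C : Set X, ClopenIn (A s) C → C.Nonempty → C ≠ A s → ¬ C ⊆ U i)
    (m : ℕ) (s : Fin m → S) (C : Set (FinHyp X))
    (hC : ClopenIn (phiImg m (fun i => A (s i))) C) (hCne : C.Nonempty)
    (hCsub : C ⊆ vBasic k U) : C = phiImg m (fun i => A (s i)) := by
  obtain ⟨G, hG⟩ := hCne
  obtain ⟨f₀, hf₀, hGeq⟩ := hC.1 hG
  haveI hm : Nonempty (Fin m) := by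
    rcases G.2.2 with ⟨y, hy⟩
    rw [hGeq] at hy
    exact Nonempty.intro hy.choose
  set P := phiImg m (fun i => A (s i)) with hP
  -- the canonical map into FinHyp
  let mk : (Fin m → X) → FinHyp X := fun f => ⟨Set.range f, Set.finite_range f, Set.range_nonempty f⟩
  have hmkP : ∀ f : Fin m → X, (∀ j, f j ∈ A (s j)) → mk f ∈ P := fun f hf => ⟨f, hf, rfl⟩
  -- the one-coordinate-change step
  have step : ∀ f : Fin m → X, (∀ j, f j ∈ A (s j)) → mk f ∈ C →
      ∀ i : Fin m, ∀ x ∈ A (s i),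
        (∀ j, Function.update f i x j ∈ A (s j)) ∧ mk (Function.update f i x) ∈ C := by
    intro f hf hfC i x hx
    have hupd : ∀ y : X, y ∈ A (s i) → ∀ j, Function.update f i y j ∈ A (s j) := by
      intro y hy j
      rcases eq_or_ne j i with rfl | hj
      · rwa [update_self]
      · rw [update_of_ne hj]; exact hf j
    refine ⟨hupd x hx, ?_⟩
    -- choose the witness j₀ containing f i
    have hcover : Set.range f ⊆ ⋃ j, U j := (hCsub hfC).1
    obtain ⟨j₀, hj₀⟩ : ∃ j₀, f i ∈ U j₀ := by
      simpa [Set.mem_iUnion] using hcover (mem_range_self i)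
    -- the map g from A (s i) into P
    let ψ : X → FinHyp X := fun y => mk (Function.update f i y)
    have hψ : Continuous ψ := by
      apply continuous_induced_rng.2
      exact range_update_continuous f i
    let g : (A (s i)) → (P : Set (FinHyp X)) := fun y =>
      ⟨ψ (y : X), hmkP _ (hupd _ y.2)⟩
    have hg : Continuous g := (hψ.comp continuous_subtype_val).subtype_mk _
    have hS1 : IsClopen (g ⁻¹' {y : (P : Set (FinHyp X)) | (y : FinHyp X) ∈ C}) :=
      hC.2.preimage hg
    set S1 := g ⁻¹' {y : (P : Set (FinHyp X)) | (y : FinHyp X) ∈ C} with hS1def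
    -- membership in S1 forces membership in some U j
    have hsub : ∀ y : (A (s i)), y ∈ S1 → ∃ j, (y : X) ∈ U j := by
      intro y hy
      have h1 : ψ (y : X) ∈ C := hy
      have h2 : Set.range (Function.update f i (y : X)) ⊆ ⋃ j, U j := (hCsub h1).1
      have h3 : (y : X) ∈ ⋃ j, U j := h2 ⟨i, update_self _ _ _⟩
      simpa [Set.mem_iUnion] using h3
    set S2 := {y : (A (s i)) | (y : X) ∈ U j₀} with hS2def
    have hS2open : IsOpen S2 := (hUo j₀).preimage continuous_subtype_val
    have hT : IsClopen (S1 ∩ S2) := by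
      constructor
      · -- closed
        have heq : S1 ∩ S2 = S1 \ ⋃ j ∈ {j : Fin k | j ≠ j₀}, {y : (A (s i)) | (y : X) ∈ U j} := by
          ext y
          simp only [Set.mem_inter_iff, Set.mem_diff, Set.mem_iUnion, Set.mem_setOf_eq,
            exists_prop, not_exists, not_and]
          constructor
          · rintro ⟨hy1, hy2⟩
            exact ⟨hy1, fun j hj hyj => hdisj j₀ j (Ne.symm hj) _ hy2 hyj⟩
          · rintro ⟨hy1, hy2⟩
            refine ⟨hy1, ?_⟩
            obtain ⟨j, hj⟩ := hsub y hy1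
            rcases eq_or_ne j j₀ with rfl | hne
            · exact hj
            · exact absurd hj (hy2 j hne)
        rw [heq]
        exact hS1.isClosed.sdiff (isOpen_biUnion fun j _ => (hUo j).preimage continuous_subtype_val)
      · exact hS1.isOpen.inter hS2open
    -- the clopen subset E of A (s i)
    set E : Set X := {x' | x' ∈ A (s i) ∧ ψ x' ∈ C ∧ x' ∈ U j₀} with hEdef
    have hEsub : E ⊆ A (s i) := fun x' hx' => hx'.1
    have hEclop : IsClopen {y : (A (s i)) | (y : X) ∈ E} := by
      have heq : {y : (A (s i)) | (y : X) ∈ E} = S1 ∩ S2 := by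
        ext y
        simp only [Set.mem_setOf_eq, hEdef, Set.mem_inter_iff]
        constructor
        · rintro ⟨_, h2, h3⟩; exact ⟨h2, h3⟩
        · rintro ⟨h2, h3⟩; exact ⟨y.2, h2, h3⟩
      rw [heq]; exact hT
    have hfiE : f i ∈ E := by
      refine ⟨hf i, ?_, hj₀⟩
      have : Function.update f i (f i) = f := Function.update_eq_self i f
      show mk (Function.update f i (f i)) ∈ C
      rw [this]; exact hfC
    have hEfull : E = A (s i) := by
      by_contra hne
      exact hwit j₀ (s i) E ⟨hEsub, hEclop⟩ ⟨f i, hfiE⟩ hne (fun x' hx' => hx'.2.2)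
    have : x ∈ E := hEfull ▸ hx
    exact this.2.1
  -- iterate the step to reach any point of the product
  have full : ∀ gg : Fin m → X, (∀ j, gg j ∈ A (s j)) → mk gg ∈ C := by
    intro gg hgg
    let h : ℕ → (Fin m → X) := fun n j => if (j : ℕ) < n then gg j else f₀ j
    have hmain : ∀ n, n ≤ m → (∀ j, h n j ∈ A (s j)) ∧ mk (h n) ∈ C := by
      intro n
      induction n with
      | zero =>
        intro _
        have h0 : h 0 = f₀ := by funext j; simp [h]
        rw [h0]
        refine ⟨hf₀, ?_⟩
        have : mk f₀ = G := Subtype.ext hGeq.symm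
        rw [this]; exact hG
      | succ n ih =>
        intro hn
        have hnm : n ≤ m := Nat.le_of_succ_le hn
        have hnlt : n < m := hn
        obtain ⟨ih1, ih2⟩ := ih hnm
        set i : Fin m := ⟨n, hnlt⟩ with hi
        have hstep := step (h n) ih1 ih2 i (gg i) (hgg i)
        have heq : h (n + 1) = Function.update (h n) i (gg i) := by
          funext j
          rcases eq_or_ne j i with rfl | hj
          · simp [h, update_self, hi]
          · rw [update_of_ne hj]
            have hji : (j : ℕ) ≠ n := by
              intro hcontra
              exact hj (Fin.ext hcontra)
            simp only [h]
            rcases Nat.lt_or_ge (j : ℕ) n with hlt | hge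
            · rw [if_pos (Nat.lt_succ_of_lt hlt), if_pos hlt]
            · have : ¬ (j : ℕ) < n + 1 := by omega
              rw [if_neg this, if_neg (by omega)]
        rw [heq]
        exact hstep
    have hfin : h m = gg := by
      funext j
      simp [h, j.isLt]
    have := (hmain m le_rfl).2
    rwa [hfin] at this
  -- conclude
  apply Set.Subset.antisymm hC.1
  rintro G' ⟨gg, hgg, hval⟩
  have : mk gg ∈ C := full gg hgg
  have hG' : G' = mk gg := Subtype.ext hval
  rw [hG']; exact this

/-- If a separable metrizable space `X` is `{A s : s ∈ S}`-cohesive, witnessed by a base `ℬ`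
of open sets, then `ℱ(X)` is `𝒜`-cohesive where
`𝒜 = {φₙ[A s₁ × ⋯ × A sₙ] : n ∈ ℕ, s₁,…,sₙ ∈ S}`, and the witnessing open neighborhoods
may be taken to be basic Vietoris sets `⟨U₁,…,U_k⟩` with all `Uᵢ ∈ ℬ`. -/
theorem finHyp_cohesive {X S : Type*} [TopologicalSpace X]
    [TopologicalSpace.SeparableSpace X] [TopologicalSpace.MetrizableSpace X]
    (A : S → Set X) (ℬ : Set (Set X))
    (hbase : TopologicalSpace.IsTopologicalBasis ℬ)
    (hcoh : ∀ x : X, ∃ U ∈ ℬ, x ∈ U ∧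
      ∀ s : S, ∀ C : Set X, ClopenIn (A s) C → C.Nonempty → C ≠ A s → ¬ C ⊆ U) :
    ∀ F : FinHyp X, ∃ (k : ℕ) (U : Fin k → Set X), (∀ i, U i ∈ ℬ) ∧
      F ∈ vBasic k U ∧ IsOpen (vBasic k U) ∧
      ∀ (m : ℕ) (s : Fin m → S), ∀ C : Set (FinHyp X),
        ClopenIn (phiImg m (fun i => A (s i))) C → C.Nonempty →
        C ≠ phiImg m (fun i => A (s i)) → ¬ C ⊆ vBasic k U := by
  intro F
  obtain ⟨hfin, hne⟩ := F.2
  -- enumerate F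
  set sF := hfin.toFinset with hsF
  set k := sF.card with hk
  let e := sF.equivFin
  let x : Fin k → X := fun i => ((e.symm i : sF) : X)
  have hx_mem : ∀ i, x i ∈ F.1 := fun i => by
    have : (e.symm i : X) ∈ sF := (e.symm i).2
    exact hfin.mem_toFinset.mp this
  have hx_inj : Function.Injective x := fun i j hij => by
    have := Subtype.ext hij
    simpa using e.symm.injective this
  have hx_surj : ∀ y ∈ F.1, ∃ i, x i = y := by
    intro y hy
    have hy' : y ∈ sF := hfin.mem_toFinset.mpr hy
    exact ⟨e ⟨y, hy'⟩, by simp [x]⟩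
  -- T2 separation of the (finite) set F
  obtain ⟨O, hO, hOdisj⟩ := hfin.t2_separation
  -- choose witnesses
  have hsel : ∀ i : Fin k, ∃ V, V ∈ ℬ ∧ x i ∈ V ∧ V ⊆ O (x i) ∧
      ∀ s : S, ∀ C : Set X, ClopenIn (A s) C → C.Nonempty → C ≠ A s → ¬ C ⊆ V := by
    intro i
    obtain ⟨W, hWB, hxW, hWwit⟩ := hcoh (x i)
    obtain ⟨V, hVB, hxV, hVsub⟩ := hbase.exists_subset_of_mem_open
      (⟨hxW, (hO (x i)).1⟩ : x i ∈ W ∩ O (x i))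
      ((hbase.isOpen hWB).inter (hO (x i)).2)
    refine ⟨V, hVB, hxV, hVsub.trans inter_subset_right, ?_⟩
    intro s C h1 h2 h3 hsub
    exact hWwit s C h1 h2 h3 (hsub.trans (hVsub.trans inter_subset_left))
  choose U hUB hxU hUO hUwit using hsel
  have hUo : ∀ i, IsOpen (U i) := fun i => hbase.isOpen (hUB i)
  have hdisj : ∀ i j, i ≠ j → ∀ y, y ∈ U i → y ∉ U j := by
    intro i j hij y hyi hyj
    have hxne : x i ≠ x j := fun hcontra => hij (hx_inj hcontra)
    have hd : Disjoint (O (x i)) (O (x j)) := hOdisj (hx_mem i) (hx_mem j) hxne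
    exact (Set.disjoint_iff.1 hd) ⟨hUO i hyi, hUO j hyj⟩
  refine ⟨k, U, hUB, ?_, vBasic_isOpen k U hUo, ?_⟩
  · constructor
    · intro y hy
      obtain ⟨i, rfl⟩ := hx_surj y hy
      exact Set.mem_iUnion.2 ⟨i, hxU i⟩
    · intro i
      exact ⟨x i, hx_mem i, hxU i⟩
  · intro m s C hclop hCne hCneq hCsub
    exact hCneq (key_lemma A U hUo hdisj hUwit m s C hclop hCne hCsub)
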